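/- If X is a [μ,λ]-compact topological space, D is a μ-complete ultrafilter over a set I, and 2^|I| ≤ λ, then X is D-compact. -/

import Mathlib

open Cardinal

/-- `X` is `[μ,λ]`-compact: every open cover by at most `lam` sets
has a subcover by fewer than `μ` sets. -/
def CptIn (μ lam : Cardinal) (X : Type) [TopologicalSpace X] : Prop :=
  ∀ 𝒰 : Set (Set X), (∀ U ∈ 𝒰, IsOpen U) → #𝒰 ≤ lam → ⋃₀ 𝒰 = Set.univ →
    ∃ 𝒱 ⊆ 𝒰, #𝒱 < μ ∧ ⋃₀ 𝒱 = Set.univ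

/-- `p` is a `D`-limit point of the sequence `x`. -/
def IsDLimit {I X : Type} [TopologicalSpace X] (D : Ultrafilter I) (x : I → X) (p : X) : Prop :=
  ∀ U : Set X, IsOpen U → p ∈ U → {i | x i ∈ U} ∈ D

/-- `X` is `D`-compact. -/
def DCompact {I : Type} (D : Ultrafilter I) (X : Type) [TopologicalSpace X] : Prop :=
  ∀ x : I → X, ∃ p : X, IsDLimit D x p

/-- `D` is `μ`-complete. -/
def MuComplete {I : Type} (μ : Cardinal) (D : Ultrafilter I) : Prop :=
  ∀ S : Set (Set I), #S < μ → (∀ A ∈ S, A ∈ D) → ⋂₀ S ∈ D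

/-- `D` is `(μ,lam)`-regular: there is a family of `lam`-many members of `D`
every intersection of `μ`-many of which is empty. -/
def RegUF {I : Type} (μ lam : Cardinal) (D : Ultrafilter I) : Prop :=
  ∃ (A : Type) (Z : A → Set I), #A = lam ∧ (∀ a, Z a ∈ D) ∧
    ∀ S : Set A, #S = μ → ⋂ a ∈ S, Z a = ∅

/-- The ordinal space of a cardinal, with the order topology. -/
noncomputable def ordSpace (c : Cardinal) : Type := c.ord.ToType

noncomputable instance (c : Cardinal) : LinearOrder (ordSpace c) :=
  inferInstanceAs (LinearOrder c.ord.ToType)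
noncomputable instance (c : Cardinal) : TopologicalSpace (ordSpace c) := Preorder.topology _
instance (c : Cardinal) : OrderTopology (ordSpace c) := ⟨rfl⟩

theorem stmt0 {I X : Type} [TopologicalSpace X] (μ lam : Cardinal) (D : Ultrafilter I)
    (hμ : ℵ₀ ≤ μ) (hml : μ ≤ lam)
    (hD : MuComplete μ D) (hI : 2 ^ #I ≤ lam) (hX : CptIn μ lam X) :
    DCompact D X := by
  intro x
  by_contra h
  push_neg at h
  simp only [IsDLimit, not_forall] at h
  -- For each A ⊆ I, the open set G A
  set G : Set I → Set X := fun A => ⋃₀ {U | IsOpen U ∧ {i | x i ∈ U} ⊆ A} with hG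
  have hGopen : ∀ A, IsOpen (G A) := fun A => isOpen_sUnion (fun U hU => hU.1)
  have hGsub : ∀ A, {i | x i ∈ G A} ⊆ A := by
    intro A i hi
    obtain ⟨U, hU, hiU⟩ := hi
    exact hU.2 hiU
  set 𝒰 : Set (Set X) := G '' {A | A ∉ D} with h𝒰
  have hcov : ⋃₀ 𝒰 = Set.univ := by
    ext p
    simp only [Set.mem_univ, iff_true]
    obtain ⟨U, hUo, hpU, hUD⟩ := h p
    exact ⟨G {i | x i ∈ U}, ⟨_, hUD, rfl⟩, ⟨U, ⟨hUo, fun i hi => hi⟩, hpU⟩⟩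
  have hcard : #𝒰 ≤ lam := by
    calc #𝒰 ≤ #{A : Set I | A ∉ D} := Cardinal.mk_image_le
    _ ≤ #(Set I) := Cardinal.mk_set_le _
    _ = 2 ^ #I := Cardinal.mk_set
    _ ≤ lam := hI
  obtain ⟨𝒱, h𝒱𝒰, h𝒱card, h𝒱cov⟩ := hX 𝒰
    (fun U hU => by obtain ⟨A, _, rfl⟩ := hU; exact hGopen A) hcard hcov
  -- each V ∈ 𝒱 has {i | x i ∈ V} ∉ D
  have hVnotD : ∀ V ∈ 𝒱, {i | x i ∈ V} ∉ D := by
    intro V hV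
    obtain ⟨A, hA, rfl⟩ := h𝒱𝒰 hV
    exact fun hmem => hA (D.mem_of_superset hmem (hGsub A))
  set S : Set (Set I) := (fun V => {i | x i ∈ V}ᶜ) '' 𝒱 with hS
  have hSD : ⋂₀ S ∈ D := by
    apply hD
    · exact lt_of_le_of_lt Cardinal.mk_image_le h𝒱card
    · rintro B ⟨V, hV, rfl⟩
      exact (Ultrafilter.compl_mem_iff_notMem).2 (hVnotD V hV)
  have hne : (⋂₀ S).Nonempty := Ultrafilter.nonempty_of_mem hSD
  obtain ⟨i, hi⟩ := hne
  have : x i ∈ ⋃₀ 𝒱 := h𝒱cov ▸ Set.mem_univ _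
  obtain ⟨V, hV, hxV⟩ := this
  exact hi _ ⟨V, hV, rfl⟩ hxV
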